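/- arXiv:0709.3887 — 2 statements merged into one kernel-verified Lean document; each statement's English description precedes it below -/
import Mathlib

section
/- (Commutation, Proposition 1.) For every n ≥ 3, all a, b ∈ ℤ/4ℤ and all i, j with 1 ≤ i ≤ n−1 and 1 ≤ j ≤ n−1, the relation ₐσᵢ · (ᵦσⱼ)⁻¹ = (₍ₐ₊₁₎σᵢ)⁻¹ · ₍ᵦ₊₁₎σⱼ holds in the braid group B_n. -/
namespace Braid

/-- The braid relations on `n` strands: generators `0, …, n-2` stand for `σ₁, …, σ_{n-1}`. -/
def braidRels (n : ℕ) : Set (FreeGroup (Fin (n - 1))) :=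
  { r | (∃ i j : Fin (n - 1), (i : ℕ) + 2 ≤ (j : ℕ) ∧
          r = FreeGroup.of i * FreeGroup.of j * (FreeGroup.of i)⁻¹ * (FreeGroup.of j)⁻¹) ∨
        (∃ i j : Fin (n - 1), (j : ℕ) = (i : ℕ) + 1 ∧
          r = FreeGroup.of i * FreeGroup.of j * FreeGroup.of i *
              (FreeGroup.of j * FreeGroup.of i * FreeGroup.of j)⁻¹) }

/-- The braid group `B_n`, presented by `σ₁, …, σ_{n-1}` and the braid relations. -/
abbrev BraidGroup (n : ℕ) := PresentedGroup (braidRels n)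

/-- The standard generator `σ i` of `B_n` (1-indexed); junk value `1` out of range. -/
def s (n : ℕ) (i : ℕ) : BraidGroup n :=
  if h : 1 ≤ i ∧ i ≤ n - 1 then PresentedGroup.of (⟨i - 1, by omega⟩ : Fin (n - 1)) else 1

/-- The Garside half-twist `Δ = (σ₁)(σ₂σ₁)(σ₃σ₂σ₁)⋯(σ_{n-1}σ_{n-2}⋯σ₁)` in `B_n`. -/
def halfTwist (n : ℕ) : BraidGroup n :=
  ((List.range (n - 1)).map
    (fun r => (((List.range (r + 1)).reverse).map (fun k => s n (k + 1))).prod)).prod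

/-- The submonoid of positive braids of `B_n`: the monoid generated by `σ₁, …, σ_{n-1}`. -/
def positive (n : ℕ) : Submonoid (BraidGroup n) :=
  Submonoid.closure (s n '' Set.Icc 1 (n - 1))

/-- The extended generators `ₐσᵢ` of `B_n`:
`₀σᵢ = σᵢ`, `₁σᵢ = Δ·σᵢ⁻¹`, `₂σᵢ = σ_{n-i}`, `₃σᵢ = Δ·σ_{n-i}⁻¹`. -/
def es (n : ℕ) (a : ZMod 4) (i : ℕ) : BraidGroup n :=
  if a = 0 then s n i
  else if a = 1 then halfTwist n * (s n i)⁻¹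
  else if a = 2 then s n (n - i)
  else halfTwist n * (s n (n - i))⁻¹

/-- An extended letter `ₐσᵢ^{e}` is coded as `(a, i, e)`, where `e = true` means
exponent `+1` (a positive letter) and `e = false` means exponent `-1` (a negative letter). -/
abbrev ELetter : Type := ZMod 4 × ℕ × Bool

/-- The element of `B_n` represented by an extended letter. -/
def eletterProd (n : ℕ) (x : ELetter) : BraidGroup n :=
  if x.2.2 then es n x.1 x.2.1 else (es n x.1 x.2.1)⁻¹

/-- The element of `B_n` represented by an extended word. -/
def eprod (n : ℕ) (W : List ELetter) : BraidGroup n :=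
  (W.map (eletterProd n)).prod

/-- The element of `B_n` represented by a positive extended word,
coded as a list of pairs `(a, i)` standing for the letters `ₐσᵢ` (no inverses). -/
def eposProd (n : ℕ) (P : List (ZMod 4 × ℕ)) : BraidGroup n :=
  (P.map (fun x => es n x.1 x.2)).prod

/-- A standard word is a list of pairs `(i, e)` standing for the letters `σᵢ^{±1}`;
this is the element of `B_n` it represents. -/
def sprod (n : ℕ) (V : List (ℕ × Bool)) : BraidGroup n :=
  (V.map (fun x => if x.2 then s n x.1 else (s n x.1)⁻¹)).prod

/-- The element of `B_n` represented by a positive standard word (a list of indices). -/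
def posProd (n : ℕ) (P : List ℕ) : BraidGroup n :=
  (P.map (s n)).prod

/-- The shift `sh(d, ₐσⱼ^{e}) = ₍ₐ₊d₎σⱼ^{f}`, with `f = e` if `d ∈ {0,2}` and
`f = -e` if `d ∈ {1,3}`. -/
def sh (d : ZMod 4) (x : ELetter) : ELetter :=
  (x.1 + d, x.2.1, if d = 0 ∨ d = 2 then x.2.2 else !x.2.2)

/-- One step of the inductive definition of the separation of an extended word. -/
def sepStep (t : List (ZMod 4) × ZMod 4 × List (ZMod 4)) (x : ELetter) :
    List (ZMod 4) × ZMod 4 × List (ZMod 4) :=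
  if x.2.2 = false then (t.1, t.2.1, t.2.2 ++ [-t.2.1])
  else
    match t.2.2 with
    | [] => (t.1 ++ [0], t.2.1, [])
    | a :: L'' => (t.1 ++ [a + t.2.1 + 1], t.2.1 + 2, L'' ++ [3 - t.2.1])

/-- The separation `(L, δ, L')` of an extended word, defined inductively from the left. -/
def separation (W : List ELetter) : List (ZMod 4) × ZMod 4 × List (ZMod 4) :=
  W.foldl sepStep ([], 0, [])

/-- The bishift `SH2(L, δ, L', W)`: the first `|L|` letters of `W` are shifted by the
entries of `L`, the remaining letters are shifted by `δ +` the entries of `L'`. -/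
def SH2 (L : List (ZMod 4)) (δ : ZMod 4) (L' : List (ZMod 4)) (W : List ELetter) :
    List ELetter :=
  List.zipWith sh L (W.take L.length) ++
    List.zipWith sh (L'.map (fun d => δ + d)) (W.drop L.length)



section AuxProof

lemma rel_one {n : ℕ} {r : FreeGroup (Fin (n-1))} (h : r ∈ braidRels n) :
    PresentedGroup.mk (braidRels n) r = 1 := by
  have : r ∈ Subgroup.normalClosure (braidRels n) := Subgroup.subset_normalClosure h
  exact (QuotientGroup.eq_one_iff r).mpr this

lemma of_comm {n : ℕ} (i j : Fin (n-1)) (h : (i:ℕ) + 2 ≤ (j:ℕ)) :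
    (PresentedGroup.of i : BraidGroup n) * PresentedGroup.of j
      = PresentedGroup.of j * PresentedGroup.of i := by
  have h1 := rel_one (n := n)
    (r := FreeGroup.of i * FreeGroup.of j * (FreeGroup.of i)⁻¹ * (FreeGroup.of j)⁻¹)
    (Or.inl ⟨i, j, h, rfl⟩)
  simp only [map_mul, map_inv] at h1
  have hmk : ∀ x : Fin (n-1),
      PresentedGroup.mk (braidRels n) (FreeGroup.of x) = PresentedGroup.of x := fun _ => rfl
  rw [hmk, hmk] at h1
  group at h1
  rw [zpow_neg_one, zpow_neg_one] at h1
  exact commutatorElement_eq_one_iff_mul_comm.mp h1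

lemma of_braid {n : ℕ} (i j : Fin (n-1)) (h : (j:ℕ) = (i:ℕ) + 1) :
    (PresentedGroup.of i : BraidGroup n) * PresentedGroup.of j * PresentedGroup.of i
      = PresentedGroup.of j * PresentedGroup.of i * PresentedGroup.of j := by
  have h1 := rel_one (n := n)
    (r := FreeGroup.of i * FreeGroup.of j * FreeGroup.of i *
              (FreeGroup.of j * FreeGroup.of i * FreeGroup.of j)⁻¹)
    (Or.inr ⟨i, j, h, rfl⟩)
  simp only [map_mul, map_inv] at h1
  have hmk : ∀ x : Fin (n-1),
      PresentedGroup.mk (braidRels n) (FreeGroup.of x) = PresentedGroup.of x := fun _ => rfl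
  rw [hmk, hmk] at h1
  rw [mul_inv_eq_one] at h1
  exact h1

lemma s_out_of_range {n : ℕ} {i : ℕ} (h : ¬ (1 ≤ i ∧ i ≤ n - 1)) : s n i = 1 := by
  rw [s, dif_neg h]

lemma s_in_range {n : ℕ} {i : ℕ} (h1 : 1 ≤ i) (h2 : i ≤ n - 1) :
    s n i = PresentedGroup.of (⟨i - 1, by omega⟩ : Fin (n - 1)) := by
  rw [s, dif_pos ⟨h1, h2⟩]

/-- Commutation of distant generators, valid for all indices thanks to junk values. -/
lemma s_comm {n : ℕ} (i j : ℕ) (h : i + 2 ≤ j) : s n i * s n j = s n j * s n i := by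
  rcases Nat.eq_zero_or_pos i with hi | hi
  · subst hi; rw [s_out_of_range (by omega)]; group
  rcases le_or_gt j (n-1) with hj | hj
  · rw [s_in_range hi (by omega), s_in_range (by omega : 1 ≤ j) hj]
    exact of_comm _ _ (by simp; omega)
  · rw [s_out_of_range (i := j) (by omega)]; group

lemma s_comm' {n : ℕ} (i j : ℕ) (h : j + 2 ≤ i) : s n i * s n j = s n j * s n i :=
  (s_comm j i h).symm

lemma s_braid {n : ℕ} (i : ℕ) (h1 : 1 ≤ i) (h2 : i + 1 ≤ n - 1) :
    s n i * s n (i+1) * s n i = s n (i+1) * s n i * s n (i+1) := by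
  rw [s_in_range h1 (by omega), s_in_range (by omega : 1 ≤ i+1) h2]
  exact of_braid _ _ (by simp; omega)

/-- `dd n r = σ_r σ_{r-1} ⋯ σ_1`. -/
noncomputable def dd (n : ℕ) : ℕ → BraidGroup n
  | 0 => 1
  | r+1 => s n (r+1) * dd n r

/-- `uu n r = σ_1 σ_2 ⋯ σ_r`. -/
noncomputable def uu (n : ℕ) : ℕ → BraidGroup n
  | 0 => 1
  | r+1 => uu n r * s n (r+1)

/-- `del n m = D_1 D_2 ⋯ D_m`. -/
noncomputable def del (n : ℕ) : ℕ → BraidGroup n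
  | 0 => 1
  | m+1 => del n m * dd n (m+1)

/-- `gam n m = U_m U_{m-1} ⋯ U_1`. -/
noncomputable def gam (n : ℕ) : ℕ → BraidGroup n
  | 0 => 1
  | m+1 => uu n (m+1) * gam n m

/-- `tt n m r = σ_m σ_{m-1} ⋯ σ_{m-r+1}`. -/
noncomputable def tt (n m : ℕ) : ℕ → BraidGroup n
  | 0 => 1
  | r+1 => tt n m r * s n (m-r)

lemma dd_zero (n : ℕ) : dd n 0 = 1 := rfl
lemma uu_zero (n : ℕ) : uu n 0 = 1 := rfl
lemma del_zero (n : ℕ) : del n 0 = 1 := rfl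
lemma gam_zero (n : ℕ) : gam n 0 = 1 := rfl
lemma tt_zero (n m : ℕ) : tt n m 0 = 1 := rfl

lemma dd_succ (n r : ℕ) : dd n (r+1) = s n (r+1) * dd n r := rfl
lemma uu_succ (n r : ℕ) : uu n (r+1) = uu n r * s n (r+1) := rfl
lemma del_succ (n m : ℕ) : del n (m+1) = del n m * dd n (m+1) := rfl
lemma gam_succ (n m : ℕ) : gam n (m+1) = uu n (m+1) * gam n m := rfl
lemma tt_succ (n m r : ℕ) : tt n m (r+1) = tt n m r * s n (m-r) := rfl

lemma dd_pred {n r : ℕ} (h : 1 ≤ r) : dd n r = s n r * dd n (r-1) := by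
  obtain ⟨r', rfl⟩ : ∃ r', r = r' + 1 := ⟨r - 1, by omega⟩
  rfl

lemma uu_pred {n r : ℕ} (h : 1 ≤ r) : uu n r = uu n (r-1) * s n r := by
  obtain ⟨r', rfl⟩ : ∃ r', r = r' + 1 := ⟨r - 1, by omega⟩
  rfl

lemma del_pred {n m : ℕ} (h : 1 ≤ m) : del n m = del n (m-1) * dd n m := by
  obtain ⟨m', rfl⟩ : ∃ m', m = m' + 1 := ⟨m - 1, by omega⟩
  rfl

lemma tt_eq (n m : ℕ) : ∀ r, r ≤ m → tt n m r = dd n m * (dd n (m-r))⁻¹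
  | 0, _ => by simp [tt]
  | r+1, h => by
    have h1 : m - r = (m - (r+1)) + 1 := by omega
    rw [tt_succ, tt_eq n m r (by omega), h1, dd_succ]
    group

lemma tt_self (n m : ℕ) : tt n m m = dd n m := by
  rw [tt_eq n m m le_rfl]; simp [dd]

lemma s_comm_dd {n : ℕ} (j : ℕ) : ∀ r, r + 2 ≤ j → s n j * dd n r = dd n r * s n j
  | 0, _ => by simp [dd]
  | r+1, h => by
    rw [dd_succ, ← mul_assoc, s_comm' j (r+1) (by omega), mul_assoc,
      s_comm_dd j r (by omega), ← mul_assoc]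

lemma s_comm_uu {n : ℕ} (j : ℕ) : ∀ r, r + 2 ≤ j → s n j * uu n r = uu n r * s n j
  | 0, _ => by simp [uu]
  | r+1, h => by
    rw [uu_succ, ← mul_assoc, s_comm_uu j r (by omega), mul_assoc,
      s_comm' j (r+1) (by omega), ← mul_assoc]

lemma s_comm_del {n : ℕ} (j : ℕ) : ∀ m, m + 2 ≤ j → s n j * del n m = del n m * s n j
  | 0, _ => by simp [del]
  | m+1, h => by
    rw [del_succ, ← mul_assoc, s_comm_del j m (by omega), mul_assoc,
      s_comm_dd j (m+1) (by omega), ← mul_assoc]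

/-- Push a generator through the descending block: `σ_i D_r = D_r σ_{i+1}` for `1 ≤ i < r`. -/
lemma s_dd {n : ℕ} : ∀ r i, 1 ≤ i → i < r → r ≤ n - 1 →
    s n i * dd n r = dd n r * s n (i+1)
  | 0, i, _, hi2, _ => by omega
  | r+1, i, hi1, hi2, hr => by
    rcases eq_or_lt_of_le (Nat.lt_succ_iff.mp hi2) with he | hlt
    · -- i = r
      subst he
      calc s n i * dd n (i+1)
          = (s n i * s n (i+1) * s n i) * dd n (i-1) := by
            rw [dd_succ, dd_pred hi1]; group
        _ = (s n (i+1) * s n i * s n (i+1)) * dd n (i-1) := by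
            rw [s_braid i hi1 (by omega)]
        _ = s n (i+1) * s n i * (dd n (i-1) * s n (i+1)) := by
            rw [mul_assoc (s n (i+1) * s n i), s_comm_dd (i+1) (i-1) (by omega)]
        _ = dd n (i+1) * s n (i+1) := by rw [dd_succ, dd_pred hi1]; group
    · -- i < r
      calc s n i * dd n (r+1)
          = s n (r+1) * (s n i * dd n r) := by
            rw [dd_succ, ← mul_assoc, s_comm i (r+1) (by omega), mul_assoc]
        _ = s n (r+1) * (dd n r * s n (i+1)) := by
            rw [s_dd r i hi1 hlt (by omega)]
        _ = dd n (r+1) * s n (i+1) := by rw [dd_succ]; group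

/-- Push a generator through the ascending block: `σ_i U_r = U_r σ_{i-1}` for `2 ≤ i ≤ r`. -/
lemma s_uu {n : ℕ} : ∀ r i, 2 ≤ i → i ≤ r → r ≤ n - 1 →
    s n i * uu n r = uu n r * s n (i-1)
  | 0, i, hi1, hi2, _ => by omega
  | r+1, i, hi1, hi2, hr => by
    rcases eq_or_lt_of_le hi2 with he | hlt
    · -- i = r+1
      subst he
      have hr1 : 1 ≤ r := by omega
      calc s n (r+1) * uu n (r+1)
          = (s n (r+1) * uu n (r-1)) * (s n r * s n (r+1)) := by
            rw [uu_succ, uu_pred hr1]; group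
        _ = uu n (r-1) * (s n r * s n (r+1) * s n r) := by
            rw [s_comm_uu (r+1) (r-1) (by omega), s_braid r hr1 hr]; group
        _ = uu n (r+1) * s n (r+1-1) := by
            simp only [Nat.add_sub_cancel]
            rw [uu_succ, uu_pred hr1]; group
    · -- i ≤ r
      have hir : i ≤ r := by omega
      calc s n i * uu n (r+1)
          = (s n i * uu n r) * s n (r+1) := by rw [uu_succ]; group
        _ = uu n r * (s n (i-1) * s n (r+1)) := by
            rw [s_uu r i hi1 hir (by omega)]; group
        _ = uu n (r+1) * s n (i-1) := by
            rw [s_comm (i-1) (r+1) (by omega), uu_succ]; group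


lemma abc {n : ℕ} : ∀ m, m ≤ n - 1 →
    ((∀ i, 1 ≤ i → i ≤ m → del n m * s n i = s n (m+1-i) * del n m) ∧
     (∀ j, 1 ≤ j → j ≤ m → s n j * gam n m = gam n m * s n (m+1-j)) ∧
     del n m = gam n m) := by
  intro m
  induction m with
  | zero => exact fun _ => ⟨fun i h1 h2 => by omega, fun j h1 h2 => by omega,
      by rw [del_zero, gam_zero]⟩
  | succ m ih =>
    intro hm1
    rcases Nat.eq_zero_or_pos m with rfl | hm
    · -- base case m+1 = 1
      have hd : del n 1 = s n 1 := by rw [del_pred le_rfl, del_zero, dd_pred le_rfl, dd_zero]; group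
      have hg : gam n 1 = s n 1 := by rw [gam_succ, gam_zero, uu_pred le_rfl, uu_zero]; group
      refine ⟨fun i h1 h2 => ?_, fun j h1 h2 => ?_, by rw [hd, hg]⟩
      · have : i = 1 := by omega
        subst this; rw [hd]
      · have : j = 1 := by omega
        subst this; rw [hg]
    obtain ⟨hP, hQ, hR⟩ := ih (by omega)
    -- push uu through del:  uu_r · del_m = del_m · tt_{m,r}
    have uu_del : ∀ r, r ≤ m → uu n r * del n m = del n m * tt n m r := by
      intro r
      induction r with
      | zero => intro _; rw [uu_zero, tt_zero]; group
      | succ r ihr =>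
        intro hr
        have h1 : s n (r+1) * del n m = del n m * s n (m-r) := by
          have := hP (m-r) (by omega) (by omega)
          have h2 : m + 1 - (m - r) = r + 1 := by omega
          rw [h2] at this
          exact this.symm
        calc uu n (r+1) * del n m
            = uu n r * (s n (r+1) * del n m) := by rw [uu_succ]; group
          _ = (uu n r * del n m) * s n (m-r) := by rw [h1]; group
          _ = del n m * tt n m (r+1) := by rw [ihr (by omega), tt_succ]; group
    -- C(m+1)
    have hR1 : del n (m+1) = gam n (m+1) := by
      have huddm : uu n m * del n m = del n m * dd n m := by
        rw [uu_del m le_rfl, tt_self]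
      have hcom : s n (m+1) * del n (m-1) = del n (m-1) * s n (m+1) :=
        s_comm_del (m+1) (m-1) (by omega)
      have hsdel : s n (m+1) * del n m = del n (m-1) * dd n (m+1) := by
        rw [del_pred hm, ← mul_assoc, hcom, dd_succ, mul_assoc]
      calc del n (m+1) = del n m * dd n (m+1) := del_succ n m
        _ = del n m * (dd n m * (dd n m)⁻¹) * (s n (m+1) * dd n m) := by
            rw [dd_succ]; group
        _ = (uu n m * del n m) * ((dd n m)⁻¹ * (s n (m+1) * dd n m)) := by
            rw [huddm]; group
        _ = uu n m * (del n (m-1) * dd n m) * ((dd n m)⁻¹ * s n (m+1) * dd n m) := by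
            rw [← del_pred hm]; group
        _ = uu n m * del n (m-1) * s n (m+1) * dd n m := by group
        _ = uu n m * s n (m+1) * del n (m-1) * dd n m := by
            rw [mul_assoc (uu n m), ← hcom]; group
        _ = uu n (m+1) * del n m := by rw [uu_succ, del_pred hm]; group
        _ = uu n (m+1) * gam n m := by rw [hR]
        _ = gam n (m+1) := (gam_succ n m).symm
    -- P(m+1) for i ≥ 2
    have hP2 : ∀ i, 2 ≤ i → i ≤ m+1 → del n (m+1) * s n i = s n (m+2-i) * del n (m+1) := by
      intro i h1 h2
      have hsd : s n (i-1) * dd n (m+1) = dd n (m+1) * s n i := by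
        have := s_dd (m+1) (i-1) (by omega) (by omega) hm1
        have he : i - 1 + 1 = i := by omega
        rw [he] at this
        exact this
      have hp : del n m * s n (i-1) = s n (m+2-i) * del n m := by
        have := hP (i-1) (by omega) (by omega)
        have he : m + 1 - (i-1) = m + 2 - i := by omega
        rw [he] at this
        exact this
      calc del n (m+1) * s n i = del n m * (s n (i-1) * dd n (m+1)) := by
            rw [del_succ, mul_assoc, ← hsd]
        _ = (del n m * s n (i-1)) * dd n (m+1) := by group
        _ = s n (m+2-i) * del n (m+1) := by rw [hp, del_succ]; group
    -- Q(m+1) for j ≥ 2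
    have hQ2 : ∀ j, 2 ≤ j → j ≤ m+1 → s n j * gam n (m+1) = gam n (m+1) * s n (m+2-j) := by
      intro j h1 h2
      have hsu : s n j * uu n (m+1) = uu n (m+1) * s n (j-1) :=
        s_uu (m+1) j h1 h2 hm1
      have hq : s n (j-1) * gam n m = gam n m * s n (m+2-j) := by
        have := hQ (j-1) (by omega) (by omega)
        have he : m + 1 - (j-1) = m + 2 - j := by omega
        rw [he] at this
        exact this
      calc s n j * gam n (m+1) = (s n j * uu n (m+1)) * gam n m := by
            rw [gam_succ]; group
        _ = uu n (m+1) * (s n (j-1) * gam n m) := by rw [hsu]; group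
        _ = gam n (m+1) * s n (m+2-j) := by rw [hq, gam_succ]; group
    refine ⟨fun i h1 h2 => ?_, fun j h1 h2 => ?_, hR1⟩
    · rcases eq_or_lt_of_le h1 with he | hlt
      · -- i = 1
        have := hQ2 (m+1) (by omega) le_rfl
        have he2 : m + 2 - (m+1) = 1 := by omega
        rw [he2, ← hR1] at this
        have hi : i = 1 := he.symm
        subst hi
        have he3 : m + 1 + 1 - 1 = m + 1 := by omega
        rw [he3]
        exact this.symm
      · have he3 : m + 1 + 1 - i = m + 2 - i := by omega
        rw [he3]
        exact hP2 i (by omega) h2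
    · rcases eq_or_lt_of_le h1 with he | hlt
      · -- j = 1
        have := hP2 (m+1) (by omega) le_rfl
        have he2 : m + 2 - (m+1) = 1 := by omega
        rw [he2, hR1] at this
        have hj : j = 1 := he.symm
        subst hj
        have he3 : m + 1 + 1 - 1 = m + 1 := by omega
        rw [he3]
        exact this.symm
      · have he3 : m + 1 + 1 - j = m + 2 - j := by omega
        rw [he3]
        exact hQ2 j (by omega) h2


lemma blk_eq (n : ℕ) : ∀ r, (((List.range r).reverse).map (fun k => s n (k + 1))).prod = dd n r
  | 0 => by simp [dd]
  | r+1 => by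
    rw [List.range_succ, List.reverse_append, dd_succ, ← blk_eq n r]
    simp

lemma half_aux (n : ℕ) : ∀ m,
    ((List.range m).map
      (fun r => (((List.range (r + 1)).reverse).map (fun k => s n (k + 1))).prod)).prod = del n m
  | 0 => by simp [del_zero]
  | m+1 => by
    rw [List.range_succ, del_succ, ← half_aux n m, ← blk_eq n (m+1)]
    simp

lemma halfTwist_eq_del (n : ℕ) : halfTwist n = del n (n-1) := half_aux n (n-1)

lemma delta_s {n : ℕ} (i : ℕ) (h1 : 1 ≤ i) (h2 : i ≤ n - 1) :
    halfTwist n * s n i = s n (n - i) * halfTwist n := by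
  have := (abc (n := n) (n-1) le_rfl).1 i h1 h2
  have he : n - 1 + 1 - i = n - i := by omega
  rw [he] at this
  rw [halfTwist_eq_del]
  exact this

lemma es_zero (n i : ℕ) : es n 0 i = s n i := by simp [es]
lemma es_one (n i : ℕ) : es n 1 i = halfTwist n * (s n i)⁻¹ := by
  rw [es, if_neg (by decide), if_pos rfl]
lemma es_two (n i : ℕ) : es n 2 i = s n (n - i) := by
  rw [es, if_neg (by decide), if_neg (by decide), if_pos rfl]
lemma es_three (n i : ℕ) : es n 3 i = halfTwist n * (s n (n - i))⁻¹ := by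
  rw [es, if_neg (by decide), if_neg (by decide), if_neg (by decide)]

lemma key {n : ℕ} (hn : 3 ≤ n) (a : ZMod 4) (i : ℕ) (h1 : 1 ≤ i) (h2 : i ≤ n - 1) :
    es n (a + 1) i * es n a i = halfTwist n := by
  have hni1 : 1 ≤ n - i := by omega
  have hni2 : n - i ≤ n - 1 := by omega
  have h4 : ∀ x : ZMod 4, x = 0 ∨ x = 1 ∨ x = 2 ∨ x = 3 := by decide
  rcases h4 a with rfl | rfl | rfl | rfl
  · rw [show ((0 : ZMod 4) + 1) = 1 from by decide, es_zero, es_one]; group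
  · rw [show ((1 : ZMod 4) + 1) = 2 from by decide, es_one, es_two, ← mul_assoc,
      ← delta_s i h1 h2]
    group
  · rw [show ((2 : ZMod 4) + 1) = 3 from by decide, es_two, es_three]; group
  · rw [show ((3 : ZMod 4) + 1) = 0 from by decide, es_zero, es_three]
    have := delta_s (n := n) (n - i) hni1 hni2
    have he : n - (n - i) = i := by omega
    rw [he] at this
    rw [← mul_assoc, ← this]
    group

end AuxProof

/-- Commutation (Proposition 1): for every `n ≥ 3`, `a, b ∈ ℤ/4ℤ`, `1 ≤ i ≤ n-1` and
`1 ≤ j ≤ n-1`, the relation `ₐσᵢ·(ᵦσⱼ)⁻¹ = (₍ₐ₊₁₎σᵢ)⁻¹·₍ᵦ₊₁₎σⱼ` holds in `B_n`. -/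
theorem commutation (n : ℕ) (hn : 3 ≤ n) (a b : ZMod 4) (i j : ℕ)
    (hi1 : 1 ≤ i) (hi2 : i ≤ n - 1) (hj1 : 1 ≤ j) (hj2 : j ≤ n - 1) :
    es n a i * (es n b j)⁻¹ = (es n (a + 1) i)⁻¹ * es n (b + 1) j := by
  have k1 := key hn a i hi1 hi2
  have k2 := key hn b j hj1 hj2
  rw [show es n a i = (es n (a + 1) i)⁻¹ * halfTwist n from by rw [← k1]; group,
    show (es n b j)⁻¹ = (halfTwist n)⁻¹ * es n (b + 1) j from by rw [← k2]; group]
  group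

end Braid
end

section
/- For every extended word W, the component δ of the separation (L, δ, L') of W always lies in {0, 2} ⊆ ℤ/4ℤ; moreover δ = 0 if and only if W is positive or the number of positive letters occurring after the first negative letter of W is even. -/
namespace Braid

lemma sepStep_neg (L : List (ZMod 4)) (δ : ZMod 4) (L' : List (ZMod 4)) (x : ELetter)
    (hx : x.2.2 = false) : sepStep (L, δ, L') x = (L, δ, L' ++ [-δ]) := by
  simp [sepStep, hx]

lemma sepStep_pos_nil (L : List (ZMod 4)) (δ : ZMod 4) (x : ELetter)
    (hx : x.2.2 = true) : sepStep (L, δ, []) x = (L ++ [0], δ, []) := by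
  simp [sepStep, hx]

lemma sepStep_pos_cons (L : List (ZMod 4)) (δ : ZMod 4) (a : ZMod 4) (L'' : List (ZMod 4))
    (x : ELetter) (hx : x.2.2 = true) :
    sepStep (L, δ, a :: L'') x = (L ++ [a + δ + 1], δ + 2, L'' ++ [3 - δ]) := by
  simp [sepStep, hx]

lemma sep_aux (W : List ELetter) :
    (separation W).2.2.length = W.countP (fun x => !x.2.2) ∧
    (separation W).2.1 =
      2 * ((((W.dropWhile (fun x => x.2.2)).tail).countP (fun x => x.2.2) : ℕ) : ZMod 4) := by
  induction W using List.reverseRecOn with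
  | nil => simp [separation]
  | append_singleton W x ih =>
    have hsep : separation (W ++ [x]) = sepStep (separation W) x := by
      simp [separation, List.foldl_append]
    rcases hS : separation W with ⟨L, δ, L'⟩
    rw [hS] at ih hsep
    obtain ⟨ih1, ih2⟩ := ih
    simp only at ih1 ih2
    have hdw := List.dropWhile_append (p := fun x : ELetter => x.2.2) (xs := W) (ys := [x])
    rcases hx : x.2.2 with _ | _
    · -- x negative
      rw [hsep, sepStep_neg L δ L' x hx]
      by_cases hW : (W.dropWhile (fun y => y.2.2)) = []
      · have hall : ∀ y ∈ W, y.2.2 = true := by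
          intro y hy
          simpa using List.dropWhile_eq_nil_iff.mp hW y hy
        constructor
        · simp [ih1, List.countP_append, List.countP_cons, hx]
        · rw [hdw]
          simp only [hW, List.isEmpty_nil, if_true]
          rw [ih2, hW]
          simp [List.dropWhile, hx]
      · have hne : (W.dropWhile (fun y => y.2.2)).isEmpty = false := by
          simpa [List.isEmpty_iff] using hW
        constructor
        · simp [ih1, List.countP_append, List.countP_cons, hx]
        · rw [hdw]
          simp only [hne, Bool.false_eq_true, if_false]
          rw [List.tail_append_of_ne_nil hW]
          rw [ih2]
          simp [List.countP_append, List.countP_cons, hx]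
    · -- x positive
      cases L' with
      | nil =>
        rw [hsep, sepStep_pos_nil L δ x hx]
        have hnil : W.countP (fun y => !y.2.2) = 0 := by rw [← ih1]; rfl
        have hall : ∀ y ∈ W, y.2.2 = true := by
          intro y hy
          by_contra h
          have hy2 : (fun z : ELetter => !z.2.2) y = true := by
            simp only [Bool.not_eq_true] at h
            simp [h]
          have := (List.countP_pos_iff (p := fun z : ELetter => !z.2.2) (l := W)).mpr ⟨y, hy, hy2⟩
          omega
        have hdwW : W.dropWhile (fun y => y.2.2) = [] :=
          List.dropWhile_eq_nil_iff.mpr (by intro y hy; simp [hall y hy])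
        have hdw2 : (W ++ [x]).dropWhile (fun y => y.2.2) = [] := by
          rw [hdw]; simp [hdwW, List.dropWhile, hx]
        constructor
        · simp [List.countP_append, List.countP_cons, hx, hnil]
        · rw [hdw2]
          rw [ih2, hdwW]
      | cons a L'' =>
        rw [hsep, sepStep_pos_cons L δ a L'' x hx]
        have hposW : 0 < W.countP (fun y => !y.2.2) := by
          rw [← ih1]; simp
        have hW : (W.dropWhile (fun y => y.2.2)) ≠ [] := by
          intro h
          obtain ⟨y, hy, hy2⟩ := List.countP_pos_iff.mp hposW
          have := List.dropWhile_eq_nil_iff.mp h y hy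
          simp only [Bool.not_eq_true'] at hy2
          rw [hy2] at this
          exact Bool.false_ne_true this
        have hne : (W.dropWhile (fun y => y.2.2)).isEmpty = false := by
          simpa [List.isEmpty_iff] using hW
        constructor
        · simp only [List.length_append, List.length_cons, List.countP_append,
            List.countP_cons, List.countP_nil, hx, Bool.not_true, List.length_nil,
            List.length_singleton] at ih1 ⊢
          simp only [Bool.false_eq_true, if_false]
          omega
        · rw [hdw]
          simp only [hne, Bool.false_eq_true, if_false]
          rw [List.tail_append_of_ne_nil hW]
          rw [List.countP_append]
          simp only [List.countP_cons, List.countP_nil, hx]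
          rw [ih2]
          push_cast
          ring

lemma two_mul_zmod4 (k : ℕ) :
    (2 * ((k : ℕ) : ZMod 4) = 0 ∨ 2 * ((k : ℕ) : ZMod 4) = 2) ∧
    (2 * ((k : ℕ) : ZMod 4) = 0 ↔ Even k) := by
  rcases Nat.even_or_odd k with ⟨m, hm⟩ | ⟨m, hm⟩ <;> subst hm
  · have h : 2 * (((m + m : ℕ) : ℕ) : ZMod 4) = 0 := by
      push_cast
      have : (2 : ZMod 4) * ((m : ZMod 4) + m) = 4 * m := by ring
      rw [this]
      have h4 : (4 : ZMod 4) = 0 := by decide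
      rw [h4, zero_mul]
    exact ⟨Or.inl h, iff_of_true h ⟨m, rfl⟩⟩
  · have h : 2 * (((2 * m + 1 : ℕ) : ℕ) : ZMod 4) = 2 := by
      push_cast
      have : (2 : ZMod 4) * (2 * (m : ZMod 4) + 1) = 4 * m + 2 := by ring
      rw [this]
      have h4 : (4 : ZMod 4) = 0 := by decide
      rw [h4, zero_mul, zero_add]
    refine ⟨Or.inr h, ?_⟩
    rw [h]
    exact iff_of_false (by decide) (by simp [Nat.even_iff, Nat.add_mul_mod_self_left])

/-- The component `δ` of the separation of any extended word `W` lies in `{0, 2}`,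
and `δ = 0` if and only if `W` is positive or the number of positive letters
occurring after the first negative letter of `W` is even. -/
theorem separation_delta (W : List ELetter) :
    ((separation W).2.1 = 0 ∨ (separation W).2.1 = 2) ∧
    ((separation W).2.1 = 0 ↔ ((∀ x ∈ W, x.2.2 = true) ∨
      Even (((W.dropWhile (fun x => x.2.2)).tail).countP (fun x => x.2.2)))) := by
  obtain ⟨-, h2⟩ := sep_aux W
  set k := ((W.dropWhile (fun x => x.2.2)).tail).countP (fun x => x.2.2) with hk
  obtain ⟨hcases, hiff⟩ := two_mul_zmod4 k
  rw [h2]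
  refine ⟨hcases, ?_⟩
  rw [hiff]
  constructor
  · intro h; exact Or.inr h
  · rintro (hall | h)
    · have hdwW : W.dropWhile (fun y => y.2.2) = [] :=
        List.dropWhile_eq_nil_iff.mpr (by intro y hy; simp [hall y hy])
      have hk0 : k = 0 := by rw [hk, hdwW]; rfl
      rw [hk0]
      exact Even.zero
    · exact h

end Braid
end
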